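/- If A and B are invertible elements of an associative unital K-algebra R satisfying B = BA⁻¹ - qA⁻¹B for some q in the ground ring K, then A and B satisfy the fundamental relation A⁻¹B⁻¹AB - B⁻¹AB = BA⁻¹B⁻¹A - A. -/
import Mathlib

lemma fundamental_aux {R : Type} [Ring R] (a a' b b' c : R)
    (ha' : a' * a = 1) (hb : b * b' = 1) (hb' : b' * b = 1)
    (hc : ∀ x : R, c * x = x * c)
    (h : b = b * a' - c * (a' * b)) :
    a' * b' * a * b - b' * a * b = b * a' * b' * a - a := by
  have k1 : a' - 1 = c * (b' * a' * b) := by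
    have h2 : b' * b = b' * (b * a') - b' * (c * (a' * b)) := by rw [← mul_sub, ← h]
    rw [hb', ← mul_assoc b' b a', hb', one_mul] at h2
    rw [← mul_assoc b' c, ← hc b', mul_assoc c b'] at h2
    rw [show b' * (a' * b) = b' * a' * b from (mul_assoc _ _ _).symm] at h2
    rw [h2]; noncomm_ring
  have k2 : b * a' * b' - 1 = c * a' := by
    have h3 : b * b' = (b * a') * b' - (c * (a' * b)) * b' := by rw [← sub_mul, ← h]
    rw [hb, mul_assoc c, mul_assoc a', hb, mul_one] at h3
    rw [h3]; noncomm_ring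
  have key : (b' * a' * b) * (b' * a * b) = a' * a := by
    calc (b' * a' * b) * (b' * a * b) = b' * a' * ((b * b') * (a * b)) := by noncomm_ring
      _ = b' * (a' * a) * b := by rw [hb, one_mul]; noncomm_ring
      _ = a' * a := by rw [ha', mul_one, hb']
  calc a' * b' * a * b - b' * a * b = (a' - 1) * (b' * a * b) := by noncomm_ring
    _ = c * ((b' * a' * b) * (b' * a * b)) := by rw [k1, mul_assoc]
    _ = c * (a' * a) := by rw [key]
    _ = (c * a') * a := by rw [mul_assoc]
    _ = (b * a' * b' - 1) * a := by rw [k2]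
    _ = b * a' * b' * a - a := by noncomm_ring

/-- If invertible elements `A, B` of an associative unital `K`-algebra `R` satisfy
`B = B A⁻¹ - q A⁻¹ B` for some `q` in the ground ring `K`, then they satisfy the
fundamental relation `A⁻¹B⁻¹AB - B⁻¹AB = BA⁻¹B⁻¹A - A`. -/
theorem fundamental_of_relation (K R : Type) [CommRing K] [Ring R] [Algebra K R]
    (q : K) (A B : Rˣ)
    (h : (B : R) = (B : R) * ((A⁻¹ : Rˣ) : R) - q • (((A⁻¹ : Rˣ) : R) * (B : R))) :
    ((A⁻¹ : Rˣ) : R) * ((B⁻¹ : Rˣ) : R) * (A : R) * (B : R) -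
        ((B⁻¹ : Rˣ) : R) * (A : R) * (B : R) =
      (B : R) * ((A⁻¹ : Rˣ) : R) * ((B⁻¹ : Rˣ) : R) * (A : R) - (A : R) := by
  rw [Algebra.smul_def] at h
  exact fundamental_aux (A : R) _ (B : R) _ _ (Units.inv_mul A) (Units.mul_inv B)
    (Units.inv_mul B) (fun x => (Algebra.commutes q x)) h
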